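/- arXiv:2102.05419 — 9 statements merged into one kernel-verified Lean document; each statement's English description precedes it below -/
import Mathlib

section
/- Let Σ' ⊆ Σ be signatures and let M = ⟨V, D, ·_M⟩ be a Σ-PNmatrix that is Σ'-deterministic. If M† = ⟨V†, D†, ·_{M†}⟩ is a rexpansion of M, A ∈ L_{Σ'}({p₁,…,pₙ}) is a formula using only connectives from Σ', and y, z ∈ A_{M†}(x₁,…,xₙ) for some x₁,…,xₙ ∈ V†, then y ∈ D† if and only if z ∈ D†. -/
set_option autoImplicit false

namespace PNPaper

/-- Formulas over a propositional signature given by a type `C` of connectives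
with arity function `ar`, generated over a set (type) `P` of sentential variables. -/
inductive Fm (C : Type) (ar : C → ℕ) (P : Type) : Type where
  | var : P → Fm C ar P
  | app : (c : C) → (Fin (ar c) → Fm C ar P) → Fm C ar P

variable {C : Type} {ar : C → ℕ} {P Q : Type} {V W : Type}

/-- Substitution, extended to the unique endomorphism of the formula algebra. -/
def Fm.subst (σ : Q → Fm C ar P) : Fm C ar Q → Fm C ar P
  | .var q => σ q
  | .app c As => .app c (fun i => (As i).subst σ)

/-- The set of substitution instances of formulas in `Ax`. -/
def instSet (Ax : Set (Fm C ar P)) : Set (Fm C ar P) :=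
  {B | ∃ A ∈ Ax, ∃ σ : P → Fm C ar P, B = A.subst σ}

/-- A formula uses only connectives from `S`. -/
def Fm.usesOnly (S : Set C) : Fm C ar P → Prop
  | .var _ => True
  | .app c As => c ∈ S ∧ ∀ i, (As i).usesOnly S

/-- All variables of the formula belong to `Vs`. -/
def Fm.varsIn (Vs : Set P) : Fm C ar P → Prop
  | .var p => p ∈ Vs
  | .app _ As => ∀ i, (As i).varsIn Vs

/-- A Σ-PNmatrix: a set of truth-values (carrier), designated values,
and a (possibly partial, non-deterministic) truth-table for each connective. -/
structure Mat (C : Type) (ar : C → ℕ) (V : Type) where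
  carrier : Set V
  desig : Set V
  int : (c : C) → (Fin (ar c) → V) → Set V

/-- Well-formedness: `D ⊆ V` and truth-tables take values in `V`. -/
def Mat.WF (M : Mat C ar V) : Prop :=
  M.desig ⊆ M.carrier ∧
  ∀ (c : C) (xs : Fin (ar c) → V), (∀ i, xs i ∈ M.carrier) → M.int c xs ⊆ M.carrier

/-- An `M`-valuation. -/
def Mat.IsVal (M : Mat C ar V) (v : Fm C ar P → V) : Prop :=
  (∀ A, v A ∈ M.carrier) ∧
  ∀ (c : C) (As : Fin (ar c) → Fm C ar P), v (.app c As) ∈ M.int c (fun i => v (As i))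

/-- The (single conclusion) consequence relation `⊢_M`. -/
def Mat.Conseq (M : Mat C ar V) (Γ : Set (Fm C ar P)) (A : Fm C ar P) : Prop :=
  ∀ v : Fm C ar P → V, M.IsVal v → (∀ B ∈ Γ, v B ∈ M.desig) → v A ∈ M.desig

/-- The strengthening `⊢_M^Ax` of `⊢_M` with (schema) axioms `Ax`. -/
def Mat.ConseqAx (M : Mat C ar V) (Ax Γ : Set (Fm C ar P)) (A : Fm C ar P) : Prop :=
  M.Conseq (Γ ∪ instSet Ax) A

/-- The multiple-conclusion consequence relation `▷_M`. -/
def Mat.MConseq (M : Mat C ar V) (Γ Δ : Set (Fm C ar P)) : Prop :=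
  ∀ v : Fm C ar P → V, M.IsVal v → (∀ B ∈ Γ, v B ∈ M.desig) → ∃ B ∈ Δ, v B ∈ M.desig

/-- The set `A_M(x₁,…,xₙ)` of possible values of `A` when `pᵢ ↦ xᵢ`. -/
def Mat.fmSet (M : Mat C ar V) (n : ℕ) (A : Fm C ar ℕ) (xs : Fin n → V) : Set V :=
  {y | ∃ v : Fm C ar ℕ → V, M.IsVal v ∧ (∀ i : Fin n, v (Fm.var i.1) = xs i) ∧ v A = y}

/-- `M` is `S`-deterministic. -/
def Mat.DetOn (M : Mat C ar V) (S : Set C) : Prop :=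
  ∀ c ∈ S, ∀ xs : Fin (ar c) → V, (∀ i, xs i ∈ M.carrier) → (M.int c xs).Subsingleton

/-- `M` is total. -/
def Mat.Total (M : Mat C ar V) : Prop :=
  ∀ (c : C) (xs : Fin (ar c) → V), (∀ i, xs i ∈ M.carrier) → (M.int c xs).Nonempty

/-- `M'` is a refinement of `M`. -/
def IsRefinement (M' M : Mat C ar V) : Prop :=
  M'.carrier ⊆ M.carrier ∧
  M'.desig = M.desig ∩ M'.carrier ∧
  ∀ (c : C) (xs : Fin (ar c) → V), (∀ i, xs i ∈ M'.carrier) → M'.int c xs ⊆ M.int c xs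

/-- `E` is an expansion function for `M` with contraction `ct`:
the sets `E x` (for truth-values `x` of `M`) are non-empty and `ct` picks, for each
element of `E x`, the unique `x` it expands (this forces pairwise disjointness). -/
def IsExpansion (M : Mat C ar V) (E : V → Set W) (ct : W → V) : Prop :=
  (∀ x ∈ M.carrier, (E x).Nonempty) ∧
  (∀ x ∈ M.carrier, ∀ y ∈ E x, ct y = x)

/-- The `E`-expansion of `M`. -/
def expMat (M : Mat C ar V) (E : V → Set W) (ct : W → V) : Mat C ar W where
  carrier := ⋃ x ∈ M.carrier, E x
  desig := ⋃ x ∈ M.desig, E x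
  int := fun c ys => ⋃ x ∈ M.int c (fun i => ct (ys i)), E x

/-- A rexpansion of `M` is a refinement of some `E`-expansion of `M`. -/
def IsRexpansion (M' : Mat C ar W) (M : Mat C ar V) : Prop :=
  ∃ (E : V → Set W) (ct : W → V), IsExpansion M E ct ∧ IsRefinement M' (expMat M E ct)

/-- Lemma `easylemma`: if `M` is `Σ'`-deterministic, `M†` is a rexpansion of `M`,
`A` uses only connectives from `Σ'` and variables among `p₁,…,pₙ`, and
`y, z ∈ A_{M†}(x₁,…,xₙ)`, then `y` is designated in `M†` iff `z` is. -/
theorem stmt0 {C : Type} {ar : C → ℕ} {V W : Type}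
    (M : Mat C ar V) (hWF : M.WF) (S' : Set C) (hdet : M.DetOn S')
    (M' : Mat C ar W) (hrex : IsRexpansion M' M)
    (n : ℕ) (A : Fm C ar ℕ) (hA : A.usesOnly S') (hvars : A.varsIn (Set.Iio n))
    (xs : Fin n → W) (hxs : ∀ i, xs i ∈ M'.carrier)
    (y z : W) (hy : y ∈ M'.fmSet n A xs) (hz : z ∈ M'.fmSet n A xs) :
    y ∈ M'.desig ↔ z ∈ M'.desig := by
  obtain ⟨E, ct, ⟨hEne, hctE⟩, hcarr, hdesig, hint⟩ := hrex
  -- basic facts about the carrier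
  have hcar : ∀ w' ∈ M'.carrier, ct w' ∈ M.carrier ∧ w' ∈ E (ct w') := by
    intro w' hw'
    have := hcarr hw'
    simp only [expMat, Set.mem_iUnion] at this
    obtain ⟨x, hx, hwx⟩ := this
    have : ct w' = x := hctE x hx w' hwx
    subst this
    exact ⟨hx, hwx⟩
  -- characterization of designation in M'
  have hdes : ∀ w' ∈ M'.carrier, (w' ∈ M'.desig ↔ ct w' ∈ M.desig) := by
    intro w' hw'
    rw [hdesig]
    constructor
    · rintro ⟨hwd, -⟩
      simp only [expMat, Set.mem_iUnion] at hwd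
      obtain ⟨x, hx, hwx⟩ := hwd
      have : ct w' = x := hctE x (hWF.1 hx) w' hwx
      rw [this]; exact hx
    · intro hct
      refine ⟨?_, hw'⟩
      simp only [expMat, Set.mem_iUnion]
      exact ⟨ct w', hct, (hcar w' hw').2⟩
  -- main induction: ct of values coincide
  have key : ∀ (A : Fm C ar ℕ), A.usesOnly S' → A.varsIn (Set.Iio n) →
      ∀ v w : Fm C ar ℕ → W, M'.IsVal v → M'.IsVal w →
      (∀ i : Fin n, v (Fm.var i.1) = xs i) → (∀ i : Fin n, w (Fm.var i.1) = xs i) →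
      ct (v A) = ct (w A) := by
    intro A
    induction A with
    | var p =>
      intro _ hvp v w hv hw hvx hwx
      have hp : p < n := hvp
      have := hvx ⟨p, hp⟩
      rw [this, hwx ⟨p, hp⟩]
    | app c As ih =>
      intro hu hvp v w hv hw hvx hwx
      obtain ⟨hcS, hAs⟩ := hu
      have hcts : ∀ i, ct (v (As i)) = ct (w (As i)) :=
        fun i => ih i (hAs i) (hvp i) v w hv hw hvx hwx
      have hctcar : ∀ i, ct (v (As i)) ∈ M.carrier :=
        fun i => (hcar _ (hv.1 (As i))).1
      have hsub := hdet c hcS (fun i => ct (v (As i))) hctcar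
      -- membership of ct-values in the M-interpretation
      have hmem : ∀ u : Fm C ar ℕ → W, M'.IsVal u →
          (∀ i, ct (u (As i)) = ct (v (As i))) →
          ct (u (.app c As)) ∈ M.int c (fun i => ct (v (As i))) := by
        intro u hu' hctu
        have h1 : u (.app c As) ∈ M'.int c (fun i => u (As i)) := hu'.2 c As
        have h2 := hint c (fun i => u (As i)) (fun i => hu'.1 (As i)) h1
        simp only [expMat, Set.mem_iUnion] at h2
        obtain ⟨x, hx, hux⟩ := h2
        have hxcar : x ∈ M.carrier :=
          hWF.2 c _ (fun i => (hcar _ (hu'.1 (As i))).1) hx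
        have : ct (u (.app c As)) = x := hctE x hxcar _ hux
        rw [this]
        have : (fun i => ct (u (As i))) = (fun i => ct (v (As i))) :=
          funext hctu
        rwa [this] at hx
      exact hsub (hmem v hv (fun _ => rfl)) (hmem w hw (fun i => (hcts i).symm))
  obtain ⟨v, hv, hvx, hvy⟩ := hy
  obtain ⟨w, hw, hwx, hwz⟩ := hz
  have hcty : ct y = ct z := by
    rw [← hvy, ← hwz]; exact key A hA hvars v w hv hw hvx hwx
  rw [hdes y (hvy ▸ hv.1 A), hdes z (hwz ▸ hw.1 A), hcty]

end PNPaper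
end

section
/- Let M = ⟨V, D, ·_M⟩ be a Σ-PNmatrix and Ax ⊆ L_Σ(P). Define the Σ-PNmatrix M♭_Ax = ⟨V♭, D♭, ·_{M♭}⟩ by: V♭ = {(x, A) ∈ V × L_Σ(P) : if A ∈ Ax^inst then x ∈ D}; D♭ = (D × L_Σ(P)) ∩ V♭; and for each k-place connective © ∈ Σ, ©_{M♭}((x₁, A₁),…,(x_k, A_k)) = {(x, ©(A₁,…,A_k)) ∈ V♭ : x ∈ ©_M(x₁,…,x_k)}. Then M♭_Ax is a rexpansion of M, and the consequence relation ⊢_{M♭_Ax} coincides with ⊢_M^Ax, the strengthening of ⊢_M with axioms Ax. -/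
set_option autoImplicit false

namespace PNPaper

variable {C : Type} {ar : C → ℕ} {P Q : Type} {V W : Type}

/-- The truth-values of `M♭_Ax`: pairs `(x, A)` such that `x ∈ D` whenever `A ∈ Ax^inst`. -/
def flatCarrier {C : Type} {ar : C → ℕ} {V : Type} (M : Mat C ar V)
    (Ax : Set (Fm C ar ℕ)) : Set (V × Fm C ar ℕ) :=
  {xa | xa.1 ∈ M.carrier ∧ (xa.2 ∈ instSet Ax → xa.1 ∈ M.desig)}

/-- The PNmatrix `M♭_Ax` of Theorem `flat`. -/
def flatMat {C : Type} {ar : C → ℕ} {V : Type} (M : Mat C ar V)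
    (Ax : Set (Fm C ar ℕ)) : Mat C ar (V × Fm C ar ℕ) where
  carrier := flatCarrier M Ax
  desig := {xa | xa.1 ∈ M.desig} ∩ flatCarrier M Ax
  int := fun c ys =>
    {xa | xa ∈ flatCarrier M Ax ∧ xa.1 ∈ M.int c (fun i => (ys i).1) ∧
          xa.2 = Fm.app c (fun i => (ys i).2)}

lemma subst_subst {C : Type} {ar : C → ℕ} {P Q R : Type}
    (σ : Q → Fm C ar P) (τ : P → Fm C ar R) (A : Fm C ar Q) :
    (A.subst σ).subst τ = A.subst (fun q => (σ q).subst τ) := by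
  induction A with
  | var q => rfl
  | app c As ih => simp only [Fm.subst]; exact congrArg _ (funext fun i => ih i)

lemma instSet_subst {C : Type} {ar : C → ℕ} {P : Type} {Ax : Set (Fm C ar P)}
    {B : Fm C ar P} (hB : B ∈ instSet Ax) (τ : P → Fm C ar P) :
    B.subst τ ∈ instSet Ax := by
  obtain ⟨A, hA, σ, rfl⟩ := hB
  exact ⟨A, hA, fun q => (σ q).subst τ, subst_subst σ τ A⟩

lemma flat_snd {C : Type} {ar : C → ℕ} {V : Type} {M : Mat C ar V}
    {Ax : Set (Fm C ar ℕ)} {v : Fm C ar ℕ → V × Fm C ar ℕ}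
    (hv : (flatMat M Ax).IsVal v) (B : Fm C ar ℕ) :
    (v B).2 = B.subst (fun p => (v (Fm.var p)).2) := by
  induction B with
  | var p => rfl
  | app c As ih =>
    have h := (hv.2 c As).2.2
    simp only [Fm.subst, h]
    exact congrArg _ (funext fun i => ih i)

/-- Theorem `flat`: `M♭_Ax` is a rexpansion of `M`, and the consequence
relation `⊢_{M♭_Ax}` coincides with the strengthening `⊢_M^Ax`. -/
theorem stmt2 {C : Type} {ar : C → ℕ} {V : Type}
    (M : Mat C ar V) (hWF : M.WF) (Ax : Set (Fm C ar ℕ)) :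
    IsRexpansion (flatMat M Ax) M ∧
    ∀ (Γ : Set (Fm C ar ℕ)) (A : Fm C ar ℕ),
      M.ConseqAx Ax Γ A ↔ (flatMat M Ax).Conseq Γ A := by
  constructor
  · -- rexpansion
    refine ⟨fun x => {x} ×ˢ (Set.univ : Set (Fm C ar ℕ)), Prod.fst, ⟨?_, ?_⟩, ?_, ?_, ?_⟩
    · exact fun x _ => ⟨(x, Fm.var 0), rfl, trivial⟩
    · rintro x _ y ⟨rfl, -⟩; rfl
    · rintro ⟨x, A⟩ hx
      exact Set.mem_biUnion hx.1 ⟨rfl, trivial⟩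
    · ext ⟨x, A⟩
      constructor
      · rintro ⟨hx, hc⟩
        exact Set.mem_inter (Set.mem_biUnion hx ⟨rfl, trivial⟩) hc
      · rintro ⟨hd, hc⟩
        simp only [expMat, Set.mem_iUnion] at hd
        obtain ⟨y, hy, rfl, -⟩ := hd
        exact ⟨hy, hc⟩
    · rintro c xs hxs ⟨x, A⟩ ⟨hc, hint, hA⟩
      exact Set.mem_biUnion hint ⟨rfl, trivial⟩
  · intro Γ A
    constructor
    · -- ⊢_M^Ax → flat
      intro h v hv hΓ
      set w : Fm C ar ℕ → V := fun B => (v B).1 with hw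
      have hwval : M.IsVal w := ⟨fun B => (hv.1 B).1, fun c As => (hv.2 c As).2.1⟩
      have hwD : ∀ B ∈ Γ ∪ instSet Ax, w B ∈ M.desig := by
        rintro B (hB | hB)
        · exact (hΓ B hB).1
        · refine (hv.1 B).2 ?_
          rw [flat_snd hv B]
          exact instSet_subst hB _
      exact ⟨h w hwval hwD, hv.1 A⟩
    · -- flat → ⊢_M^Ax
      intro h w hw hΓ
      set v : Fm C ar ℕ → V × Fm C ar ℕ := fun B => (w B, B) with hvdef
      have hvval : (flatMat M Ax).IsVal v := by
        constructor
        · exact fun B => ⟨hw.1 B, fun hB => hΓ B (Or.inr hB)⟩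
        · intro c As
          exact ⟨⟨hw.1 _, fun hB => hΓ _ (Or.inr hB)⟩, hw.2 c As, rfl⟩
      exact (h v hvval fun B hB => ⟨hΓ B (Or.inl hB), hvval.1 B⟩).1

end PNPaper
end

section
/- Let M = ⟨V, D, ·_M⟩ be a Σ-PNmatrix, Ax ⊆ L_Σ(P), and M♭_Ax the Σ-PNmatrix with values V♭ = {(x, A) ∈ V × L_Σ(P) : if A ∈ Ax^inst then x ∈ D}, designated values D♭ = (D × L_Σ(P)) ∩ V♭, and ©_{M♭}((x₁, A₁),…,(x_k, A_k)) = {(x, ©(A₁,…,A_k)) ∈ V♭ : x ∈ ©_M(x₁,…,x_k)}. Then M♭_Ax is a refinement of the E-expansion of M for the expansion function E(x) = {x} × L_Σ(P), whose contraction Ẽ satisfies Ẽ(x, A) = x; in particular, for every M♭_Ax-valuation v♭, the composite Ẽ ∘ v♭ is an M-valuation satisfying (Ẽ ∘ v♭)(Ax^inst) ⊆ D. -/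
set_option autoImplicit false

namespace PNPaper

variable {C : Type} {ar : C → ℕ} {P Q : Type} {V W : Type}

/-- `M♭_Ax` is a refinement of the `E`-expansion of `M` for
`E(x) = {x} × L_Σ(P)`, whose contraction is `Ẽ(x, A) = x` (i.e. `Prod.fst`);
in particular every `M♭_Ax`-valuation `v♭` yields an `M`-valuation `Ẽ ∘ v♭`
designating all instances of the axioms. -/
theorem stmt3 {C : Type} {ar : C → ℕ} {V : Type}
    (M : Mat C ar V) (hWF : M.WF) (Ax : Set (Fm C ar ℕ)) :
    IsExpansion M (fun x => {x} ×ˢ (Set.univ : Set (Fm C ar ℕ))) Prod.fst ∧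
    IsRefinement (flatMat M Ax)
      (expMat M (fun x => {x} ×ˢ (Set.univ : Set (Fm C ar ℕ))) Prod.fst) ∧
    ∀ v : Fm C ar ℕ → V × Fm C ar ℕ, (flatMat M Ax).IsVal v →
      M.IsVal (fun A => (v A).1) ∧ ∀ B ∈ instSet Ax, (v B).1 ∈ M.desig := by
  refine ⟨⟨fun x _ => ⟨(x, Fm.var 0), by simp⟩, fun x _ y hy => ?_⟩, ?_, ?_⟩
  · simp only [Set.mem_prod, Set.mem_singleton_iff] at hy
    exact hy.1
  · refine ⟨?_, ?_, ?_⟩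
    · intro xa hxa
      simp only [expMat, Set.mem_iUnion]
      exact ⟨xa.1, hxa.1, by simp⟩
    · ext xa
      simp only [flatMat, expMat, Set.mem_inter_iff, Set.mem_iUnion, Set.mem_setOf_eq]
      constructor
      · rintro ⟨h1, h2, h3⟩
        exact ⟨⟨xa.1, h1, by simp⟩, h2, h3⟩
      · rintro ⟨⟨x, hx, hmem⟩, h2, h3⟩
        simp only [Set.mem_prod, Set.mem_singleton_iff] at hmem
        exact ⟨hmem.1 ▸ hx, h2, h3⟩
    · intro c xs _ xa hxa
      simp only [flatMat, Set.mem_setOf_eq] at hxa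
      simp only [expMat, Set.mem_iUnion]
      exact ⟨xa.1, hxa.2.1, by simp⟩
  · intro v hv
    obtain ⟨hcar, hint⟩ := hv
    have hint' : ∀ (c : C) (As : Fin (ar c) → Fm C ar ℕ),
        (v (.app c As)).1 ∈ M.int c (fun i => (v (As i)).1) ∧
        (v (.app c As)).2 = Fm.app c (fun i => (v (As i)).2) := by
      intro c As
      have := hint c As
      simp only [flatMat, Set.mem_setOf_eq] at this
      exact ⟨this.2.1, this.2.2⟩
    have hsnd : ∀ B : Fm C ar ℕ, (v B).2 = B.subst (fun p => (v (.var p)).2) := by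
      intro B
      induction B with
      | var p => rfl
      | app c As ih =>
        rw [(hint' c As).2]
        simp only [Fm.subst]
        exact congrArg _ (funext fun i => ih i)
    refine ⟨⟨fun A => (hcar A).1, fun c As => (hint' c As).1⟩, ?_⟩
    rintro B ⟨A, hA, σ, rfl⟩
    apply (hcar (A.subst σ)).2
    refine ⟨A, hA, fun p => (σ p).subst (fun q => (v (.var q)).2), ?_⟩
    rw [hsnd]
    clear hsnd hint' hint hcar hA
    induction A with
    | var p => rfl
    | app c As ih =>
      simp only [Fm.subst]
      exact congrArg _ (funext fun i => ih i)

end PNPaper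
end

section
/- Let M = ⟨V, D, ·_M⟩ be a Σ-PNmatrix, Ax ⊆ L_Σ(P), and M♭_Ax the Σ-PNmatrix with values V♭ = {(x, A) ∈ V × L_Σ(P) : if A ∈ Ax^inst then x ∈ D}, designated values D♭ = (D × L_Σ(P)) ∩ V♭, and ©_{M♭}((x₁, A₁),…,(x_k, A_k)) = {(x, ©(A₁,…,A_k)) ∈ V♭ : x ∈ ©_M(x₁,…,x_k)}. If v♭ is an M♭_Ax-valuation and v♭(A) = (x, B), then B is a substitution instance of A, i.e., B ∈ A^inst; concretely B = A^σ for the substitution σ given by σ(p) = C whenever v♭(p) = (y, C). -/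
set_option autoImplicit false

namespace PNPaper

variable {C : Type} {ar : C → ℕ} {P Q : Type} {V W : Type}

/-- if `v♭` is an `M♭_Ax`-valuation and `v♭(A) = (x, B)`, then `B = A^σ`
for the substitution `σ(p) = C` whenever `v♭(p) = (y, C)`; in particular `B ∈ A^inst`. -/
theorem stmt4 {C : Type} {ar : C → ℕ} {V : Type}
    (M : Mat C ar V) (hWF : M.WF) (Ax : Set (Fm C ar ℕ))
    (v : Fm C ar ℕ → V × Fm C ar ℕ) (hv : (flatMat M Ax).IsVal v) (A : Fm C ar ℕ) :
    (v A).2 = A.subst (fun p => (v (Fm.var p)).2) ∧ (v A).2 ∈ instSet {A} := by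
  have main : ∀ A : Fm C ar ℕ, (v A).2 = A.subst (fun p => (v (Fm.var p)).2) := by
    intro A
    induction A with
    | var p => rfl
    | app c As ih =>
      have h := (hv.2 c As).2.2
      simp only [Fm.subst, h]
      congr 1
      funext i
      exact ih i
  exact ⟨main A, A, rfl, _, main A⟩

end PNPaper
end

section
/- Let Σ be the signature with a single 2-place connective →, and let MP = ⟨{0,1}, {1}, ·_MP⟩ be the Σ-Nmatrix with →_MP(1,0) = {0} and →_MP(x,y) = {0,1} for all other pairs (x,y). Then ⊢_MP coincides exactly with the consequence relation generated by the single Hilbert-style rule of modus ponens (from p and p → q infer q): Γ ⊢_MP A if and only if A is derivable from Γ by repeated applications of modus ponens (i.e., A belongs to the least set containing Γ and closed under: if B and B → C are in the set so is C). -/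
set_option autoImplicit false

namespace PNPaper

variable {C : Type} {ar : C → ℕ} {P Q : Type} {V W : Type}

/-- The signature with a single 2-place connective `→`. -/
abbrev impAr : Unit → ℕ := fun _ => 2

/-- Formulas of the implicative signature. -/
abbrev Fm7 := Fm Unit impAr ℕ

/-- Implication `A → B`. -/
def imp (A B : Fm7) : Fm7 := Fm.app () ![A, B]

/-- The two-valued Nmatrix `MP` with classical-looking implication except that
`→(0,0), →(0,1), →(1,1)` are fully non-deterministic and `→(1,0) = {0}`. -/
def MPmat : Mat Unit impAr Bool where
  carrier := Set.univ
  desig := {true}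
  int := fun _ xs => if xs 0 = true ∧ xs 1 = false then {false} else Set.univ

/-- Derivability by repeated applications of modus ponens: the least set containing `Γ`
and closed under: if `B` and `B → C` are in the set, so is `C`. -/
inductive MPDeriv (Γ : Set Fm7) : Fm7 → Prop where
  | prem {A : Fm7} : A ∈ Γ → MPDeriv Γ A
  | mp {A B : Fm7} : MPDeriv Γ A → MPDeriv Γ (imp A B) → MPDeriv Γ B

/-- `⊢_MP` coincides exactly with the consequence relation generated by
the single Hilbert-style rule of modus ponens. -/
theorem stmt7 (Γ : Set Fm7) (A : Fm7) :
    MPmat.Conseq Γ A ↔ MPDeriv Γ A := by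
  constructor
  · intro h
    classical
    by_contra hnd
    set v : Fm7 → Bool := fun B => decide (MPDeriv Γ B) with hv
    have hval : MPmat.IsVal v := by
      refine ⟨fun A => trivial, ?_⟩
      intro c As
      have hAs : As = ![As 0, As 1] := by
        funext i; fin_cases i <;> rfl
      simp only [MPmat]
      split
      · next hcond =>
        obtain ⟨h0, h1⟩ := hcond
        have hd0 : MPDeriv Γ (As 0) := of_decide_eq_true h0
        have hnd1 : ¬ MPDeriv Γ (As 1) := of_decide_eq_false h1
        have : ¬ MPDeriv Γ (Fm.app c As) := by
          intro hderiv
          apply hnd1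
          apply MPDeriv.mp hd0
          cases c
          rw [imp, ← hAs]
          exact hderiv
        simp only [hv, decide_eq_false this]
        exact rfl
      · trivial
    have := h v hval (fun B hB => by
      simp [hv, MPmat, MPDeriv.prem hB])
    simp [hv, MPmat, hnd] at this
  · intro h
    induction h with
    | prem hA => intro v hv hΓ; exact hΓ _ hA
    | @mp A' B' hA hAB ihA ihAB =>
      intro v hv hΓ
      have h1 := ihA v hv hΓ
      have h2 := ihAB v hv hΓ
      simp only [MPmat, Set.mem_singleton_iff] at h1 h2 ⊢
      by_contra hB
      have hB' : v B' = false := by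
        cases hv' : v B'
        · rfl
        · exact absurd hv' hB
      have := hv.2 () ![A', B']
      rw [show Fm.app () ![A', B'] = imp A' B' from rfl] at this
      simp only [MPmat] at this
      have hcond : (fun i => v (![A', B'] i)) 0 = true ∧ (fun i => v (![A', B'] i)) 1 = false := by
        exact ⟨by simpa using h1, by simpa using hB'⟩
      rw [if_pos hcond] at this
      rw [h2] at this
      exact Bool.noConfusion this


end PNPaper
end

section
/- Let M = ⟨V, D, ·_M⟩ be a Σ-PNmatrix, Ax ⊆ L_Σ(P), Σ^d ⊆ Σ, Θ_Ax the look-ahead set of Ax, and M♯_Ax = ⟨V♯, D♯, ·_{M♯}⟩ the Σ-PNmatrix with V♯ = ⋃_{v ∈ Val_M^Ax} {f^A_v : A ∈ L_Σ(P)}, D♯ = {f ∈ V♯ : f(ε) ∈ D}, and ©_{M♯}(f₁,…,f_k) = ⋃_{v ∈ Val_M^Ax} {f^{©(A₁,…,A_k)}_v : f^{A_i}_v = f_i for 1 ≤ i ≤ k}. Then M♯_Ax is a refinement of the E-expansion of M for the expansion function E(x) = {f ∈ V^{Θ_Ax} : f(ε) = x}, whose contraction Ẽ satisfies Ẽ(f)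 = f(ε); in particular, for every k-place © ∈ Σ, every v ∈ Val_M, and all A₁,…,A_k ∈ L_Σ(P), f^{©(A₁,…,A_k)}_v(ε) ∈ ©_M(f^{A₁}_v(ε),…,f^{A_k}_v(ε)). -/
set_option autoImplicit false

namespace PNPaper

variable {C : Type} {ar : C → ℕ} {P Q : Type} {V W : Type}

/-- The 1-place connectives of the signature that are not in `Σᵈ`. -/
def UC (C : Type) (ar : C → ℕ) (Sd : Set C) : Type := {c : C // ar c = 1 ∧ c ∉ Sd}

/-- The formula `wA` obtained by prefixing `A` with the string `w ∈ U*` of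
1-place connectives. -/
def prefixFm {C : Type} {ar : C → ℕ} {Sd : Set C}
    (w : List (UC C ar Sd)) (A : Fm C ar ℕ) : Fm C ar ℕ :=
  w.foldr (fun c B => Fm.app c.1 (fun _ => B)) A

/-- A set of strings is closed under taking prefixes. -/
def PrefixClosed {α : Type} (Th : Set (List α)) : Prop :=
  ∀ s t : List α, s <+: t → t ∈ Th → s ∈ Th

/-- `B` is a `Σᵈ`-simple formula (based on some connective `c`), with all prefixes of
the strings used in its decomposition belonging to the look-ahead set `Th`:
`B = A^σ` for a structure formula `A ∈ L_{Σᵈ}({q₁,…,qₙ,r₁,…,r_m})` and a substitution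
`σ` with `σ(qᵢ) = wᵢ p_{jᵢ}` and `σ(r_l) = u_l c(p₁,…,p_k)`. -/
def SimpleWithin {C : Type} {ar : C → ℕ} (Sd : Set C)
    (Th : Set (List (UC C ar Sd))) (B : Fm C ar ℕ) : Prop :=
  ∃ (c : C) (n m : ℕ) (A : Fm C ar (Fin n ⊕ Fin m))
    (w : Fin n → List (UC C ar Sd)) (j : Fin n → Fin (ar c))
    (u : Fin m → List (UC C ar Sd)) (p : Fin (ar c) → ℕ),
      Function.Injective p ∧ A.usesOnly Sd ∧
      B = A.subst (Sum.elim
            (fun i => prefixFm (w i) (Fm.var (p (j i))))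
            (fun l => prefixFm (u l) (Fm.app c (fun i => Fm.var (p i))))) ∧
      (∀ i t, t <+: w i → t ∈ Th) ∧ (∀ l t, t <+: u l → t ∈ Th)

/-- `Val_M^Ax`: the `M`-valuations designating all instances of the axioms. -/
def ValAx {C : Type} {ar : C → ℕ} {V : Type} (M : Mat C ar V)
    (Ax : Set (Fm C ar ℕ)) : Set (Fm C ar ℕ → V) :=
  {v | M.IsVal v ∧ ∀ B ∈ instSet Ax, v B ∈ M.desig}

/-- The look-ahead function `f^A_v : Θ → V`, `f^A_v(w) = v(wA)`. -/
def fA {C : Type} {ar : C → ℕ} {V : Type} {Sd : Set C}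
    (Th : Set (List (UC C ar Sd))) (v : Fm C ar ℕ → V) (A : Fm C ar ℕ) : ↥Th → V :=
  fun w => v (prefixFm w.1 A)

/-- The PNmatrix `M♯_Ax` of the ♯-construction (Theorem `theconstruction`). -/
def sharpMat {C : Type} {ar : C → ℕ} {V : Type} {Sd : Set C}
    (M : Mat C ar V) (Ax : Set (Fm C ar ℕ)) (Th : Set (List (UC C ar Sd)))
    (hε : [] ∈ Th) : Mat C ar (↥Th → V) where
  carrier := {f | ∃ v ∈ ValAx M Ax, ∃ A, f = fA Th v A}
  desig := {f | (∃ v ∈ ValAx M Ax, ∃ A, f = fA Th v A) ∧ f ⟨[], hε⟩ ∈ M.desig}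
  int := fun c fs =>
    {g | ∃ v ∈ ValAx M Ax, ∃ As : Fin (ar c) → Fm C ar ℕ,
      (∀ i, fA Th v (As i) = fs i) ∧ g = fA Th v (Fm.app c As)}

/-- `M♯_Ax` is a refinement of the `E`-expansion of `M` for the expansion
function `E(x) = {f ∈ V^Θ : f(ε) = x}`, whose contraction is `Ẽ(f) = f(ε)`; in
particular `f^{c(A₁,…,A_k)}_v(ε) ∈ c_M(f^{A₁}_v(ε),…,f^{A_k}_v(ε))` for every `M`-valuation `v`. -/
theorem stmt10 {C : Type} {ar : C → ℕ} {V : Type} {Sd : Set C}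
    (M : Mat C ar V) (hWF : M.WF) (Ax : Set (Fm C ar ℕ))
    (Th : Set (List (UC C ar Sd))) (hε : [] ∈ Th) :
    IsExpansion M (fun x => {f : ↥Th → V | f ⟨[], hε⟩ = x}) (fun f => f ⟨[], hε⟩) ∧
    IsRefinement (sharpMat M Ax Th hε)
      (expMat M (fun x => {f : ↥Th → V | f ⟨[], hε⟩ = x}) (fun f => f ⟨[], hε⟩)) ∧
    ∀ (c : C) (v : Fm C ar ℕ → V), M.IsVal v → ∀ As : Fin (ar c) → Fm C ar ℕ,
      fA Th v (Fm.app c As) ⟨[], hε⟩ ∈ M.int c (fun i => fA Th v (As i) ⟨[], hε⟩) := by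
  have hfA : ∀ (v : Fm C ar ℕ → V) (A : Fm C ar ℕ), fA Th v A ⟨[], hε⟩ = v A := by
    intro v A; rfl
  refine ⟨⟨?_, ?_⟩, ⟨?_, ?_, ?_⟩, ?_⟩
  · intro x _; exact ⟨fun _ => x, rfl⟩
  · intro x _ y hy; exact hy
  · rintro f ⟨v, hv, A, rfl⟩
    exact Set.mem_biUnion (hv.1.1 A) (hfA v A)
  · ext f
    constructor
    · rintro ⟨⟨v, hv, A, rfl⟩, hd⟩
      exact ⟨Set.mem_biUnion hd rfl, v, hv, A, rfl⟩
    · rintro ⟨hd, v, hv, A, rfl⟩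
      refine ⟨⟨v, hv, A, rfl⟩, ?_⟩
      rcases Set.mem_iUnion₂.1 hd with ⟨x, hx, hfx⟩
      rw [show (fA Th v A) ⟨[], hε⟩ = x from hfx]; exact hx
  · rintro c fs hfs g ⟨v, hv, As, hAs, rfl⟩
    refine Set.mem_biUnion ?_ (hfA v _)
    have : (fun i => (fs i) ⟨[], hε⟩) = fun i => v (As i) := by
      funext i; rw [← hAs i]; rfl
    rw [this]; exact hv.1.2 c As
  · intro c v hv As
    rw [hfA]
    have : (fun i => fA Th v (As i) ⟨[], hε⟩) = fun i => v (As i) := by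
      funext i; rfl
    rw [this]; exact hv.2 c As

end PNPaper
end

section
/- Let M, Ax, Σ^d, Θ_Ax and the Σ-PNmatrix M♯_Ax be as in the ♯-construction. Let v♯ be an M♯_Ax-valuation, A ∈ L_Σ(P), and u, w ∈ U* strings over the 1-place connectives not in Σ^d such that uw ∈ Θ_Ax. Then v♯(wA)(u) = v♯(A)(uw). -/
set_option autoImplicit false

namespace PNPaper

variable {C : Type} {ar : C → ℕ} {P Q : Type} {V W : Type}

/-- for every `M♯_Ax`-valuation `v♯`, formula `A`, and strings `u, w`
over the 1-place connectives not in `Σᵈ` with `uw ∈ Θ_Ax`, one has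
`v♯(wA)(u) = v♯(A)(uw)`. -/
theorem stmt11 {C : Type} {ar : C → ℕ} {V : Type} {Sd : Set C}
    (M : Mat C ar V) (hWF : M.WF) (Ax : Set (Fm C ar ℕ))
    (Th : Set (List (UC C ar Sd))) (hε : [] ∈ Th) (hpc : PrefixClosed Th)
    (v : Fm C ar ℕ → (↥Th → V)) (hv : (sharpMat M Ax Th hε).IsVal v)
    (A : Fm C ar ℕ) (u w : List (UC C ar Sd)) (hu : u ∈ Th) (huw : u ++ w ∈ Th) :
    v (prefixFm w A) ⟨u, hu⟩ = v A ⟨u ++ w, huw⟩ := by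
  -- one-step lemma
  have step : ∀ (c : UC C ar Sd) (B : Fm C ar ℕ) (s : List (UC C ar Sd))
      (hs : s ∈ Th) (hsc : s ++ [c] ∈ Th),
      v (Fm.app c.1 (fun _ => B)) ⟨s, hs⟩ = v B ⟨s ++ [c], hsc⟩ := by
    intro c B s hs hsc
    obtain ⟨v₀, hv₀, As', hAs', heq⟩ := hv.2 c.1 (fun _ => B)
    have h1 : ar c.1 = 1 := c.2.1
    have i0 : Fin (ar c.1) := ⟨0, by omega⟩
    have hAs'const : As' = fun _ => As' i0 := by
      funext i
      congr 1
      exact Fin.ext (by omega)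
    have hpre : prefixFm (s ++ [c]) (As' i0)
        = prefixFm s (Fm.app c.1 (fun _ => As' i0)) := by
      unfold prefixFm
      rw [List.foldr_append]
      rfl
    calc v (Fm.app c.1 (fun _ => B)) ⟨s, hs⟩
        = v₀ (prefixFm s (Fm.app c.1 As')) := by rw [heq]; rfl
      _ = v₀ (prefixFm (s ++ [c]) (As' i0)) := by rw [hpre, ← hAs'const]
      _ = fA Th v₀ (As' i0) ⟨s ++ [c], hsc⟩ := rfl
      _ = v B ⟨s ++ [c], hsc⟩ := by rw [hAs' i0]
  induction w generalizing u with
  | nil =>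
    simp only [prefixFm, List.foldr_nil]
    congr 1
    simp
  | cons c w' ih =>
    have hsc : u ++ [c] ∈ Th := hpc _ _ ⟨w', by simp⟩ huw
    have huw' : (u ++ [c]) ++ w' ∈ Th := by simpa using huw
    have : prefixFm (c :: w') A = Fm.app c.1 (fun _ => prefixFm w' A) := rfl
    rw [this, step c (prefixFm w' A) u hu hsc, ih (u ++ [c]) hsc huw']
    congr 1
    simp

end PNPaper
end

section
/- Let M = ⟨V, D, ·_M⟩ be a Σ-PNmatrix and Ax ⊆ L_Σ(P) satisfying the hypotheses of the ♯-construction (there is Σ^d ⊆ Σ such that M is a rexpansion of some Σ^d-deterministic PNmatrix and all formulas in Ax are Σ^d-simple). If M is monadic, then the PNmatrix M♯_Ax is also monadic. More precisely, if f^{A₁}_{v₁} ≠ f^{A₂}_{v₂} in V♯, pick w ∈ Θ_Ax with x₁ = f^{A₁}_{v₁}(w) ≠ f^{A₂}_{v₂}(w) = x₂ and a separator S ∈ L_Σ({p}) for x₁, x₂ in M; then R(p) = S(w p) is a separator for f^{A₁}_{v₁} and f^{A₂}_{v₂} in M♯_Ax. -/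
set_option autoImplicit false

namespace PNPaper

variable {C : Type} {ar : C → ℕ} {P Q : Type} {V W : Type}

/-- The set `S_M(x)` of possible values of the one-variable formula `S` (in the
variable `p = p₀`, here the variable `0`) when `p ↦ x`. -/
def sepSet {C : Type} {ar : C → ℕ} {V : Type} (M : Mat C ar V)
    (S : Fm C ar ℕ) (x : V) : Set V :=
  {y | ∃ v : Fm C ar ℕ → V, M.IsVal v ∧ v (Fm.var 0) = x ∧ v S = y}

/-- Two sets of truth-values are separated: one consists of designated values and
the other of undesignated ones. -/
def Separated {C : Type} {ar : C → ℕ} {V : Type} (M : Mat C ar V)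
    (X Y : Set V) : Prop :=
  (X ⊆ M.desig ∧ Y ⊆ M.carrier \ M.desig) ∨ (Y ⊆ M.desig ∧ X ⊆ M.carrier \ M.desig)

/-- `S` is a (monadic) separator for `x` and `y` in `M`. -/
def IsSeparator {C : Type} {ar : C → ℕ} {V : Type} (M : Mat C ar V)
    (S : Fm C ar ℕ) (x y : V) : Prop :=
  S.varsIn {0} ∧ (∀ z ∈ M.carrier, (sepSet M S z).Nonempty) ∧
  Separated M (sepSet M S x) (sepSet M S y)

/-- `M` is monadic: every pair of distinct truth-values has a separator. -/
def Monadic {C : Type} {ar : C → ℕ} {V : Type} (M : Mat C ar V) : Prop :=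
  ∀ x ∈ M.carrier, ∀ y ∈ M.carrier, x ≠ y → ∃ S, IsSeparator M S x y

section Aux

variable {Sd : Set C}

lemma prefixFm_append (t w : List (UC C ar Sd)) (A : Fm C ar ℕ) :
    prefixFm (t ++ w) A = prefixFm t (prefixFm w A) :=
  List.foldr_append

lemma varsIn_prefixFm (w : List (UC C ar Sd)) :
    (prefixFm w (Fm.var 0 : Fm C ar ℕ)).varsIn {0} := by
  induction w with
  | nil => exact rfl
  | cons c w ih => exact fun _ => ih

lemma varsIn_subst {Vs : Set ℕ} (σ : ℕ → Fm C ar ℕ) (hσ : ∀ q, (σ q).varsIn Vs) :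
    ∀ B : Fm C ar ℕ, (B.subst σ).varsIn Vs := by
  intro B
  induction B with
  | var q => exact hσ q
  | app c As ih => exact fun i => ih i

lemma sharp_carrier_eval {M : Mat C ar V} {Ax : Set (Fm C ar ℕ)}
    {Th : Set (List (UC C ar Sd))} {hε : [] ∈ Th} {f : ↥Th → V}
    (hf : f ∈ (sharpMat M Ax Th hε).carrier) (t : ↥Th) : f t ∈ M.carrier := by
  obtain ⟨v, hv, A, rfl⟩ := hf
  exact hv.1.1 _

lemma sharp_eval {M : Mat C ar V} {Ax : Set (Fm C ar ℕ)}
    {Th : Set (List (UC C ar Sd))} {hε : [] ∈ Th} (hpc : PrefixClosed Th)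
    {u : Fm C ar ℕ → (↥Th → V)} (hu : (sharpMat M Ax Th hε).IsVal u) :
    ∀ (w t : List (UC C ar Sd)) (B : Fm C ar ℕ) (h : t ++ w ∈ Th) (ht : t ∈ Th),
      u (prefixFm w B) ⟨t, ht⟩ = u B ⟨t ++ w, h⟩ := by
  intro w
  induction w with
  | nil => intro t B h ht; simp only [List.append_nil]; rfl
  | cons c w ih =>
    intro t B h ht
    have h1 : t ++ [c] ∈ Th := hpc _ _ ⟨w, by simp⟩ h
    obtain ⟨v, hv, As', hAs', heq⟩ := hu.2 c.1 (fun _ => prefixFm w B)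
    have har : ar c.1 = 1 := c.2.1
    have i0 : Fin (ar c.1) := ⟨0, by omega⟩
    have hi : ∀ i : Fin (ar c.1), As' i = As' i0 := by
      intro i; congr 1; have := i.2; have := i0.2; ext; omega
    have hpre : prefixFm t (Fm.app c.1 As') = prefixFm (t ++ [c]) (As' i0) := by
      rw [prefixFm_append]
      have : Fm.app c.1 As' = prefixFm [c] (As' i0) := by
        show Fm.app c.1 As' = Fm.app c.1 (fun _ => As' i0)
        congr 1; funext i; exact hi i
      rw [this]
    have step1 : u (prefixFm (c :: w) B) ⟨t, ht⟩ = v (prefixFm (t ++ [c]) (As' i0)) := by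
      show u (Fm.app c.1 (fun _ => prefixFm w B)) ⟨t, ht⟩ = _
      rw [heq]
      show v (prefixFm t (Fm.app c.1 As')) = _
      rw [hpre]
    have step2 : v (prefixFm (t ++ [c]) (As' i0)) = u (prefixFm w B) ⟨t ++ [c], h1⟩ := by
      have := congrFun (hAs' i0) ⟨t ++ [c], h1⟩
      exact this
    have h2 : (t ++ [c]) ++ w ∈ Th := by simpa using h
    have step3 := ih (t ++ [c]) B h2 h1
    rw [step1, step2, step3]
    congr 1
    simp

lemma sharp_val_exists {M : Mat C ar V} {Ax : Set (Fm C ar ℕ)}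
    {Th : Set (List (UC C ar Sd))} {hε : [] ∈ Th} {g : ↥Th → V}
    (hg : g ∈ (sharpMat M Ax Th hε).carrier) :
    ∃ u, (sharpMat M Ax Th hε).IsVal u ∧ u (Fm.var 0) = g := by
  obtain ⟨v, hv, A, rfl⟩ := hg
  refine ⟨fun B => fA Th v (B.subst fun _ => A), ⟨?_, ?_⟩, rfl⟩
  · intro B; exact ⟨v, hv, _, rfl⟩
  · intro c As
    exact ⟨v, hv, fun i => (As i).subst fun _ => A, fun i => rfl, rfl⟩

lemma pullback_val {M : Mat C ar V} {Ax : Set (Fm C ar ℕ)}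
    {Th : Set (List (UC C ar Sd))} {hε : [] ∈ Th} (σ : ℕ → Fm C ar ℕ)
    {u : Fm C ar ℕ → (↥Th → V)} (hu : (sharpMat M Ax Th hε).IsVal u) :
    M.IsVal (fun B => u (B.subst σ) ⟨[], hε⟩) := by
  constructor
  · intro B
    obtain ⟨v, hv, A, hA⟩ := hu.1 (B.subst σ)
    show u (B.subst σ) ⟨[], hε⟩ ∈ M.carrier
    rw [hA]
    exact hv.1.1 _
  · intro c As
    obtain ⟨v, hv, As', h1, h2⟩ := hu.2 c (fun i => (As i).subst σ)
    have h3 := hv.1.2 c As'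
    have h4 : (fun i => u ((As i).subst σ) ⟨[], hε⟩) = fun i => v (As' i) := by
      funext i
      exact (congrFun (h1 i) ⟨[], hε⟩).symm
    show u (Fm.app c fun i => (As i).subst σ) ⟨[], hε⟩ ∈ _
    rw [h2, h4]
    exact h3

end Aux

/-- Proposition `monadic`: under the hypotheses of the ♯-construction,
if `M` is monadic then so is `M♯_Ax`; more precisely, if `f₁ ≠ f₂` in `V♯`, say
`f₁(w) ≠ f₂(w)` for `w ∈ Θ_Ax`, and `S` separates `f₁(w)` and `f₂(w)` in `M`, then
`R(p) = S(w p)` separates `f₁` and `f₂` in `M♯_Ax`. -/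
theorem stmt14 {C : Type} {ar : C → ℕ} {V V₀ : Type} {Sd : Set C}
    (M : Mat C ar V) (hWF : M.WF) (Ax : Set (Fm C ar ℕ))
    (M₀ : Mat C ar V₀) (hWF₀ : M₀.WF) (hdet : M₀.DetOn Sd) (hrex : IsRexpansion M M₀)
    (Th : Set (List (UC C ar Sd))) (hε : [] ∈ Th) (hpc : PrefixClosed Th)
    (hAx : ∀ B ∈ Ax, SimpleWithin Sd Th B)
    (hmon : Monadic M) :
    Monadic (sharpMat M Ax Th hε) ∧
    ∀ f₁ ∈ (sharpMat M Ax Th hε).carrier, ∀ f₂ ∈ (sharpMat M Ax Th hε).carrier,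
      ∀ (w : List (UC C ar Sd)) (hw : w ∈ Th), f₁ ⟨w, hw⟩ ≠ f₂ ⟨w, hw⟩ →
        ∀ S : Fm C ar ℕ, IsSeparator M S (f₁ ⟨w, hw⟩) (f₂ ⟨w, hw⟩) →
          IsSeparator (sharpMat M Ax Th hε)
            (S.subst (fun _ => prefixFm w (Fm.var 0))) f₁ f₂ := by
  have key : ∀ f₁ ∈ (sharpMat M Ax Th hε).carrier, ∀ f₂ ∈ (sharpMat M Ax Th hε).carrier,
      ∀ (w : List (UC C ar Sd)) (hw : w ∈ Th), f₁ ⟨w, hw⟩ ≠ f₂ ⟨w, hw⟩ →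
        ∀ S : Fm C ar ℕ, IsSeparator M S (f₁ ⟨w, hw⟩) (f₂ ⟨w, hw⟩) →
          IsSeparator (sharpMat M Ax Th hε)
            (S.subst (fun _ => prefixFm w (Fm.var 0))) f₁ f₂ := by
    intro f₁ hf₁ f₂ hf₂ w hw hne S hS
    obtain ⟨hSvars, hSne, hSsep⟩ := hS
    set σ : ℕ → Fm C ar ℕ := fun _ => prefixFm w (Fm.var 0) with hσ
    set R : Fm C ar ℕ := S.subst σ with hR
    have main : ∀ (f : ↥Th → V) (g : ↥Th → V), g ∈ sepSet (sharpMat M Ax Th hε) R f →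
        g ∈ (sharpMat M Ax Th hε).carrier ∧ g ⟨[], hε⟩ ∈ sepSet M S (f ⟨w, hw⟩) := by
      intro f g hg
      obtain ⟨u, hu, hu0, rfl⟩ := hg
      refine ⟨hu.1 R, ?_⟩
      refine ⟨fun B => u (B.subst σ) ⟨[], hε⟩, pullback_val σ hu, ?_, rfl⟩
      show u (prefixFm w (Fm.var 0)) ⟨[], hε⟩ = f ⟨w, hw⟩
      have h0 : ([] : List (UC C ar Sd)) ++ w ∈ Th := hw
      rw [sharp_eval hpc hu w [] (Fm.var 0) h0 hε, hu0]
      rfl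
    refine ⟨varsIn_subst σ (fun _ => varsIn_prefixFm w) S, ?_, ?_⟩
    · intro g hg
      obtain ⟨u, hu, hu0⟩ := sharp_val_exists hg
      exact ⟨u R, u, hu, hu0, rfl⟩
    · rcases hSsep with ⟨h1, h2⟩ | ⟨h1, h2⟩
      · left
        constructor
        · intro g hg
          obtain ⟨hc, hs⟩ := main f₁ g hg
          exact ⟨hc, h1 hs⟩
        · intro g hg
          obtain ⟨hc, hs⟩ := main f₂ g hg
          exact ⟨hc, fun hd => (h2 hs).2 hd.2⟩
      · right
        constructor
        · intro g hg
          obtain ⟨hc, hs⟩ := main f₂ g hg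
          exact ⟨hc, h1 hs⟩
        · intro g hg
          obtain ⟨hc, hs⟩ := main f₁ g hg
          exact ⟨hc, fun hd => (h2 hs).2 hd.2⟩
  constructor
  · intro f₁ hf₁ f₂ hf₂ hne
    have : ∃ t : ↥Th, f₁ t ≠ f₂ t := by
      by_contra h
      push_neg at h
      exact hne (funext h)
    obtain ⟨⟨w, hw⟩, hwne⟩ := this
    have hx1 : f₁ ⟨w, hw⟩ ∈ M.carrier := sharp_carrier_eval hf₁ _
    have hx2 : f₂ ⟨w, hw⟩ ∈ M.carrier := sharp_carrier_eval hf₂ _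
    obtain ⟨S, hS⟩ := hmon _ hx1 _ hx2 hwne
    exact ⟨_, key f₁ hf₁ f₂ hf₂ w hw hwne S hS⟩
  · exact key

end PNPaper
end

section
/- Let M = ⟨V, D, ·_M⟩ be a Σ-PNmatrix and M† = ⟨V†, D†, ·_{M†}⟩ a rexpansion of M via an expansion function E with contraction Ẽ. Then for every M†-valuation v†, the composite Ẽ ∘ v† is an M-valuation; consequently, for every A ∈ L_Σ({p₁,…,pₙ}) and all x₁,…,xₙ ∈ V†, Ẽ(A_{M†}(x₁,…,xₙ)) ⊆ A_M(Ẽ(x₁),…,Ẽ(xₙ)). -/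
set_option autoImplicit false

namespace PNPaper

variable {C : Type} {ar : C → ℕ} {P Q : Type} {V W : Type}

/-- if `M†` is a rexpansion of `M` via `E` with contraction `Ẽ = ct`, then
`Ẽ ∘ v†` is an `M`-valuation for every `M†`-valuation `v†`, and consequently
`Ẽ(A_{M†}(x₁,…,xₙ)) ⊆ A_M(Ẽ(x₁),…,Ẽ(xₙ))`. -/
theorem stmt16 {C : Type} {ar : C → ℕ} {V W : Type}
    (M : Mat C ar V) (hWF : M.WF) (M' : Mat C ar W)
    (E : V → Set W) (ct : W → V) (hE : IsExpansion M E ct)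
    (href : IsRefinement M' (expMat M E ct)) :
    (∀ v : Fm C ar ℕ → W, M'.IsVal v → M.IsVal (fun A => ct (v A))) ∧
    ∀ (n : ℕ) (A : Fm C ar ℕ), A.varsIn (Set.Iio n) →
      ∀ xs : Fin n → W, (∀ i, xs i ∈ M'.carrier) →
        ct '' M'.fmSet n A xs ⊆ M.fmSet n A (fun i => ct (xs i)) := by
  obtain ⟨hcar, hdes, hint⟩ := href
  have hctcar : ∀ y ∈ M'.carrier, ct y ∈ M.carrier := by
    intro y hy
    have := hcar hy
    simp only [expMat, Set.mem_iUnion] at this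
    obtain ⟨x, hx, hyx⟩ := this
    rw [hE.2 x hx y hyx]; exact hx
  have hval : ∀ v : Fm C ar ℕ → W, M'.IsVal v → M.IsVal (fun A => ct (v A)) := by
    intro v hv
    refine ⟨fun A => hctcar _ (hv.1 A), fun c As => ?_⟩
    have h1 : v (.app c As) ∈ (expMat M E ct).int c (fun i => v (As i)) :=
      hint c _ (fun i => hv.1 (As i)) (hv.2 c As)
    simp only [expMat, Set.mem_iUnion] at h1
    obtain ⟨x, hx, hyx⟩ := h1
    have hxcar : x ∈ M.carrier :=
      hWF.2 c _ (fun i => hctcar _ (hv.1 (As i))) hx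
    show ct (v (.app c As)) ∈ _
    rw [hE.2 x hxcar _ hyx]; exact hx
  refine ⟨hval, fun n A _ xs _ y hy => ?_⟩
  obtain ⟨z, ⟨v, hv, hvar, hvA⟩, rfl⟩ := hy
  exact ⟨fun B => ct (v B), hval v hv, fun i => by simp only [hvar i], by simp only [hvA]⟩

end PNPaper
end
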